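/- The bar map is an involution on partitions in the k×l box: for every partition λ in the k×l box, bar(bar(λ)) = λ. -/

import Mathlib

/-- `lam` (1-indexed; the relevant entries are `lam 1, …, lam l`) is a partition in the
`k × l` box, i.e. `k ≥ λ₁ ≥ λ₂ ≥ … ≥ λ_l ≥ 0`. -/
def IsBoxPartition (k l : ℕ) (lam : ℕ → ℤ) : Prop :=
  lam 1 ≤ (k : ℤ) ∧ (∀ i : ℕ, 1 ≤ i → i < l → lam (i + 1) ≤ lam i) ∧ 0 ≤ lam l

/-- The Durfee number `d_λ`: the largest `i ∈ {1, …, l}` with `λ_i ≥ i`, and `0` if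
no such `i` exists. -/
def durfee (l : ℕ) (lam : ℕ → ℤ) : ℕ :=
  (Finset.Icc 1 l).sup (fun i => if (i : ℤ) ≤ lam i then i else 0)

/-- The bar map `λ ↦ bar(λ)`:
`bar(λ)_i = d_λ + k − λ_{d_λ − i + 1}` for `1 ≤ i ≤ d_λ` and
`bar(λ)_i = d_λ − λ_{l − i + d_λ + 1}` for `d_λ < i ≤ l`. -/
def bar (k l : ℕ) (lam : ℕ → ℤ) : ℕ → ℤ := fun i =>
  if i ≤ durfee l lam then
    (durfee l lam : ℤ) + (k : ℤ) - lam (durfee l lam - i + 1)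
  else
    (durfee l lam : ℤ) - lam (l - i + durfee l lam + 1)

/-- The size `|λ| = λ₁ + ⋯ + λ_l` of a partition in the `k × l` box. -/
def boxSize (l : ℕ) (lam : ℕ → ℤ) : ℤ :=
  ∑ i ∈ Finset.Icc 1 l, lam i

/-- The Poincaré dual `κ̂` of a partition `κ` in the `k × l` box: `κ̂_i = k − κ_{l+1−i}`. -/
def dualP (k l : ℕ) (kap : ℕ → ℤ) : ℕ → ℤ := fun i =>
  (k : ℤ) - kap (l + 1 - i)

lemma mono_lam (k l : ℕ) (lam : ℕ → ℤ) (hlam : IsBoxPartition k l lam) :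
    ∀ j i : ℕ, 1 ≤ i → i ≤ j → j ≤ l → lam j ≤ lam i := by
  intro j
  induction j with
  | zero => intro i h1 h2 h3; omega
  | succ n ih =>
    intro i h1 h2 h3
    rcases Nat.eq_or_lt_of_le h2 with h | h
    · rw [h]
    · calc lam (n + 1) ≤ lam n := hlam.2.1 n (by omega) (by omega)
        _ ≤ lam i := ih i h1 (by omega) (by omega)

lemma durfee_le (l : ℕ) (lam : ℕ → ℤ) : durfee l lam ≤ l := by
  apply Finset.sup_le
  intro i hi
  simp only [Finset.mem_Icc] at hi
  split <;> omega

lemma le_durfee (l : ℕ) (lam : ℕ → ℤ) (i : ℕ) (h1 : 1 ≤ i) (h2 : i ≤ l)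
    (h : (i : ℤ) ≤ lam i) : i ≤ durfee l lam := by
  have := Finset.le_sup (f := fun j : ℕ => if (j : ℤ) ≤ lam j then j else 0)
    (Finset.mem_Icc.mpr ⟨h1, h2⟩ : i ∈ Finset.Icc 1 l)
  simp [h] at this; exact this

lemma durfee_bar (k l : ℕ) (hk : 1 ≤ k) (hl : 1 ≤ l) (lam : ℕ → ℤ)
    (hlam : IsBoxPartition k l lam) : durfee l (bar k l lam) = durfee l lam := by
  have hdl : durfee l lam ≤ l := durfee_le l lam
  apply le_antisymm
  · apply Finset.sup_le
    intro i hi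
    simp only [Finset.mem_Icc] at hi
    split_ifs with h
    · by_contra hc
      push_neg at hc
      have hbar : bar k l lam i = (durfee l lam : ℤ) - lam (l - i + durfee l lam + 1) := by
        simp only [bar]
        rw [if_neg (by omega)]
      have h0 : 0 ≤ lam (l - i + durfee l lam + 1) := by
        have hm := mono_lam k l lam hlam l (l - i + durfee l lam + 1) (by omega) (by omega) le_rfl
        have := hlam.2.2
        linarith
      rw [hbar] at h
      have hdi : (durfee l lam : ℤ) < (i : ℤ) := by exact_mod_cast hc
      linarith
    · omega
  · rcases Nat.eq_zero_or_pos (durfee l lam) with h0 | h0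
    · omega
    · apply le_durfee l (bar k l lam) (durfee l lam) h0 hdl
      have hbar : bar k l lam (durfee l lam) =
          (durfee l lam : ℤ) + (k : ℤ) - lam (durfee l lam - durfee l lam + 1) := by
        simp only [bar]
        rw [if_pos le_rfl]
      rw [hbar]
      have he : durfee l lam - durfee l lam + 1 = 1 := by omega
      rw [he]
      have h1 : lam 1 ≤ (k : ℤ) := hlam.1
      linarith

/-- The bar map is an involution on partitions in the `k × l` box:
`bar(bar(λ))_i = λ_i` for all `1 ≤ i ≤ l`. -/
theorem bar_bar (k l : ℕ) (hk : 1 ≤ k) (hl : 1 ≤ l)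
    (lam : ℕ → ℤ) (hlam : IsBoxPartition k l lam) :
    ∀ i : ℕ, 1 ≤ i → i ≤ l → bar k l (bar k l lam) i = lam i := by
  intro i h1 h2
  have hdb := durfee_bar k l hk hl lam hlam
  have hdl : durfee l lam ≤ l := durfee_le l lam
  by_cases hc : i ≤ durfee l lam
  · have e1 : bar k l (bar k l lam) i =
        (durfee l lam : ℤ) + (k : ℤ) - bar k l lam (durfee l lam - i + 1) := by
      simp only [bar, hdb]
      rw [if_pos hc]
    have hj : durfee l lam - i + 1 ≤ durfee l lam := by omega
    have e2 : bar k l lam (durfee l lam - i + 1) =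
        (durfee l lam : ℤ) + (k : ℤ) - lam (durfee l lam - (durfee l lam - i + 1) + 1) := by
      simp only [bar]
      rw [if_pos hj]
    have e3 : durfee l lam - (durfee l lam - i + 1) + 1 = i := by omega
    rw [e1, e2, e3]; ring
  · push_neg at hc
    have e1 : bar k l (bar k l lam) i =
        (durfee l lam : ℤ) - bar k l lam (l - i + durfee l lam + 1) := by
      simp only [bar, hdb]
      rw [if_neg (by omega)]
    have e2 : bar k l lam (l - i + durfee l lam + 1) =
        (durfee l lam : ℤ) - lam (l - (l - i + durfee l lam + 1) + durfee l lam + 1) := by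
      simp only [bar]
      rw [if_neg (by omega)]
    have e3 : l - (l - i + durfee l lam + 1) + durfee l lam + 1 = i := by omega
    rw [e1, e2, e3]; ring
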